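/- A Dyck word w lies in the image of the standard RPF natural spelling function γ if and only if ")())" is not a substring of w and ")()" is not a suffix of w. -/

import Mathlib

/-- A Dyck word over {(,)}, encoded as `List Bool` with `true` = '(' and `false` = ')'. -/
def IsDyck (w : List Bool) : Prop :=
  (∀ k, (w.take k).count false ≤ (w.take k).count true) ∧
    w.count true = w.count false

/-- The standard RPF natural spelling function.  `true` = '(' and `false` = ')'.
For `n ≥ 2`, `γ n` is the concatenation over `i = 0, …, m-1` of `"(" ++ γ aᵢ ++ ")"`,
where `aᵢ` is the exponent of the `i`-th prime (`Nat.nth Nat.Prime i`, 0-indexed, so the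
0th prime is 2) in the factorization of `n`, and the `(m-1)`-st prime is the greatest
prime factor of `n` (so `m = Nat.count Nat.Prime (gpf n) + 1`). -/
noncomputable def gamma : ℕ → List Bool
  | 0 => []
  | 1 => [true, false]
  | (n+2) =>
    ((List.range (Nat.count Nat.Prime ((n+2).factorization.support.sup id) + 1)).map
      (fun i => (true :: gamma ((n+2).factorization (Nat.nth Nat.Prime i))) ++ [false])).flatten
termination_by n => n
decreasing_by exact Nat.factorization_lt _ (by omega)


section GammaAux
open List Finset DyckStep


/-- Words that are nonempty block sequences whose last block has nonempty good content. -/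
inductive B : List Bool → Prop
  | last1 : B (true :: [true, false] ++ [false])
  | last (x : List Bool) (hx : B x) : B (true :: x ++ [false])
  | cons0 (w : List Bool) (hw : B w) : B ((true :: ([] : List Bool) ++ [false]) ++ w)
  | cons1 (w : List Bool) (hw : B w) : B ((true :: [true, false] ++ [false]) ++ w)
  | cons (x w : List Bool) (hx : B x) (hw : B w) : B ((true :: x ++ [false]) ++ w)

/-- Good words: intended to be exactly the range of `gamma`. -/
def G (w : List Bool) : Prop := w = [] ∨ w = [true, false] ∨ B w

lemma B.last' {x : List Bool} (hx : G x) (hne : x ≠ []) : B (true :: x ++ [false]) := by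
  rcases hx with rfl | rfl | h
  · exact absurd rfl hne
  · exact B.last1
  · exact B.last x h

lemma B.cons' {x w : List Bool} (hx : G x) (hw : B w) : B ((true :: x ++ [false]) ++ w) := by
  rcases hx with rfl | rfl | h
  · exact B.cons0 w hw
  · exact B.cons1 w hw
  · exact B.cons x w h hw

lemma B.ne_nil {w : List Bool} (h : B w) : w ≠ [] := by
  cases h <;> simp

lemma B.head_true {w : List Bool} (h : B w) : ∃ t, w = true :: t := by
  cases h <;> exact ⟨_, rfl⟩

lemma B.three_le_length {w : List Bool} (h : B w) : 3 ≤ w.length := by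
  induction h with
  | last1 => simp
  | last x hx ih =>
    have := hx.ne_nil
    have : 1 ≤ x.length := by cases x; · simp at this
                              · simp
    simp <;> omega
  | cons0 w hw ih => simp <;> omega
  | cons1 w hw ih => simp <;> omega
  | cons x w hx hw ihx ihw => simp <;> omega

lemma B.not_tff_prefix {w : List Bool} (h : B w) : ¬ ([true, false, false] <+: w) := by
  cases h with
  | last1 => decide
  | last x hx =>
    obtain ⟨t, rfl⟩ := hx.head_true
    rintro ⟨s, hs⟩; simp at hs
  | cons0 w hw =>
    obtain ⟨t, rfl⟩ := hw.head_true
    rintro ⟨s, hs⟩; simp at hs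
  | cons1 w hw => rintro ⟨s, hs⟩; simp at hs
  | cons x w hx hw =>
    obtain ⟨t, rfl⟩ := hx.head_true
    rintro ⟨s, hs⟩; simp at hs

lemma B.getLast?_false {w : List Bool} (h : B w) : w.getLast? = some false := by
  induction h with
  | last1 => rfl
  | last x hx ih => rw [show true :: x ++ [false] = (true :: x) ++ [false] from rfl, getLast?_concat]
  | cons0 w hw ih => rw [getLast?_append_of_ne_nil _ hw.ne_nil, ih]
  | cons1 w hw ih => rw [getLast?_append_of_ne_nil _ hw.ne_nil, ih]
  | cons x w hx hw ihx ihw => rw [getLast?_append_of_ne_nil _ hw.ne_nil, ihw]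

lemma G.getLast?_false {w : List Bool} (h : G w) (hne : w ≠ []) : w.getLast? = some false := by
  rcases h with rfl | rfl | h
  · exact absurd rfl hne
  · rfl
  · exact h.getLast?_false


lemma infix_append_split {α : Type*} {P a b : List α} (h : P <:+: a ++ b) :
    P <:+: a ∨ P <:+: b ∨
      ∃ s t, s ≠ [] ∧ t ≠ [] ∧ P = s ++ t ∧ s <:+ a ∧ t <+: b := by
  obtain ⟨u, v, huv⟩ := h
  rw [append_eq_append_iff] at huv
  rcases huv with ⟨w, hw1, hw2⟩ | ⟨w, hw1, hw2⟩
  · left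
    exact ⟨u, w, by rw [hw1, append_assoc]⟩
  · rw [append_eq_append_iff] at hw1
    rcases hw1 with ⟨z, hz1, hz2⟩ | ⟨z, hz1, hz2⟩
    · -- a = u ++ z, P = z ++ w, b = w ++ v
      rcases eq_or_ne z [] with rfl | hzne
      · right; left
        rw [nil_append] at hz2
        exact ⟨[], v, by rw [hw2, hz2, nil_append]⟩
      rcases eq_or_ne w [] with rfl | hwne
      · left
        rw [append_nil] at hz2
        exact ⟨u, [], by rw [hz1, hz2, append_nil]⟩
      · right; right
        exact ⟨z, w, hzne, hwne, hz2, ⟨u, hz1.symm⟩, ⟨v, hw2.symm⟩⟩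
    · -- u = a ++ z, w = z ++ P, b = w ++ v
      right; left
      exact ⟨z, v, by rw [hw2, hz2, append_assoc]⟩

def nopat (w : List Bool) : Prop :=
  ¬ ([false, true, false, false] <:+: w) ∧ ¬ ([false, true, false] <:+ w)

lemma blk_getLast? (x : List Bool) : (true :: x ++ [false]).getLast? = some false := by
  rw [show true :: x ++ [false] = (true :: x) ++ [false] from rfl, getLast?_concat]

lemma nopat_blk {x : List Bool} (hx0 : G x) (hx : nopat x) :
    nopat (true :: x ++ [false]) := by
  constructor
  · intro hinf
    rw [show true :: x ++ [false] = [true] ++ (x ++ [false]) from rfl] at hinf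
    rcases infix_append_split hinf with h | h | ⟨s, t, hs, ht, hP, hsuf, hpre⟩
    · exact absurd h.length_le (by simp)
    · rcases infix_append_split h with h' | h' | ⟨s, t, hs, ht, hP, hsuf, hpre⟩
      · exact hx.1 h'
      · exact absurd h'.length_le (by simp)
      · -- t nonempty prefix of [false]
        obtain ⟨z, hz⟩ := hpre
        have ht1 : t = [false] := by
          cases t with
          | nil => exact absurd rfl ht
          | cons a t' => cases t' <;> simp_all
        subst ht1
        have hs1 : s = [false, true, false] := by
          have := hP
          rcases s with _ | ⟨a, _ | ⟨b, _ | ⟨c, _ | ⟨d, s'⟩⟩⟩⟩ <;> simp_all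
        subst hs1
        exact hx.2 hsuf
    · -- s nonempty suffix of [true]
      obtain ⟨z, hz⟩ := hsuf
      rcases s with _ | ⟨a, s₂⟩
      · exact absurd rfl hs
      · have ha : false = a ∧ [true, false, false] = s₂ ++ t := by simpa using hP
        obtain ⟨rfl, -⟩ := ha
        rcases z with _ | ⟨c, z⟩ <;> simp at hz
  · intro ⟨z, hz⟩
    rcases eq_or_ne x [] with rfl | hne
    · apply_fun List.length at hz; simp at hz
    · have h1 : (true :: x ++ [false]).getLast? = some false := blk_getLast? x
      have h2 : (z ++ [false, true, false]).getLast? = some false := by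
        rw [show z ++ [false, true, false] = (z ++ [false, true]) ++ [false] by simp, getLast?_concat]
      -- drop last element: true :: x = z ++ [false, true]
      have h3 : true :: x = z ++ [false, true] := by
        have : (true :: x) ++ [false] = (z ++ [false, true]) ++ [false] := by
          simpa [append_assoc] using hz.symm
        exact append_cancel_right this
      have h4 : (true :: x).getLast? = some true := by
        rw [h3, show z ++ [false, true] = (z ++ [false]) ++ [true] by simp, getLast?_concat]
      have h5 : (true :: x).getLast? = some false := by
        rw [show true :: x = [true] ++ x from rfl, getLast?_append_of_ne_nil _ hne,
          hx0.getLast?_false hne]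
      rw [h4] at h5
      simp at h5

lemma nopat_append {x y : List Bool} (hx0 : G x) (hx : nopat x) (hy : B y) (hyn : nopat y) :
    nopat ((true :: x ++ [false]) ++ y) := by
  constructor
  · intro hinf
    rcases infix_append_split hinf with h | h | ⟨s, t, hs, ht, hP, hsuf, hpre⟩
    · exact (nopat_blk hx0 hx).1 h
    · exact hyn.1 h
    · rcases s with _ | ⟨a, _ | ⟨b, _ | ⟨c, _ | ⟨d, s'⟩⟩⟩⟩
      · exact absurd rfl hs
      · -- s = [a]; from hP a = false, t = [true,false,false]
        have ha : a = false ∧ [true, false, false] = t := by simpa using hP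
        rw [← ha.2] at hpre
        exact hy.not_tff_prefix hpre
      · have hab : a = false ∧ b = true ∧ [false, false] = t := by simpa using hP
        obtain ⟨rfl, rfl, hab2⟩ := hab
        subst hab2
        obtain ⟨z, hz⟩ := hsuf
        have h1 : (true :: x ++ [false]).getLast? = some false := blk_getLast? x
        rw [← hz, show z ++ [false, true] = (z ++ [false]) ++ [true] by simp,
          getLast?_concat] at h1
        simp at h1
      · have habc : a = false ∧ b = true ∧ c = false ∧ [false] = t := by simpa using hP
        obtain ⟨rfl, rfl, rfl, habc2⟩ := habc
        subst habc2
        obtain ⟨z, hz⟩ := hpre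
        obtain ⟨t', ht'⟩ := hy.head_true
        rw [ht'] at hz
        simp at hz
      · -- s has ≥ 4 elements, so t = []
        have hlen := congrArg List.length hP
        simp only [length_cons, length_append, length_nil] at hlen
        exact ht (List.length_eq_zero_iff.mp (by omega))
  · intro hsuf
    have h3 : 3 ≤ y.length := hy.three_le_length
    have hy_suf : y <:+ (true :: x ++ [false]) ++ y := suffix_append _ _
    rcases suffix_or_suffix_of_suffix hsuf hy_suf with h | h
    · exact hyn.2 h
    · have hl := h.length_le
      simp at hl
      have : y = [false, true, false] := h.eq_of_length (by simp; omega)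
      rw [this] at hy
      obtain ⟨t', ht'⟩ := hy.head_true
      simp at ht'

lemma nopat_nil : nopat ([] : List Bool) := by constructor <;> decide
lemma nopat_pair : nopat [true, false] := by constructor <;> decide

lemma B.nopat {w : List Bool} (h : B w) : nopat w := by
  induction h with
  | last1 => exact nopat_blk (Or.inr (Or.inl rfl)) nopat_pair
  | last x hx ih => exact nopat_blk (Or.inr (Or.inr hx)) ih
  | cons0 w hw ihw => exact nopat_append (Or.inl rfl) nopat_nil hw ihw
  | cons1 w hw ihw => exact nopat_append (Or.inr (Or.inl rfl)) nopat_pair hw ihw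
  | cons x w hx hw ihx ihw => exact nopat_append (Or.inr (Or.inr hx)) ihx hw ihw

lemma G.nopat {w : List Bool} (h : G w) : nopat w := by
  rcases h with rfl | rfl | h
  · exact nopat_nil
  · exact nopat_pair
  · exact h.nopat

def toStep (b : Bool) : DyckStep := bif b then U else D
def ofStep (s : DyckStep) : Bool := match s with | U => true | D => false

lemma toStep_inj : Function.Injective toStep := by intro a b h; cases a <;> cases b <;> simp_all [toStep]
lemma ofStep_inj : Function.Injective ofStep := by intro a b h; cases a <;> cases b <;> simp_all [ofStep]
@[simp] lemma ofStep_toStep (b : Bool) : ofStep (toStep b) = b := by cases b <;> rfl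
@[simp] lemma map_ofStep_toStep (l : List Bool) : (l.map toStep).map ofStep = l := by
  rw [List.map_map]
  have : ofStep ∘ toStep = id := by funext b; cases b <;> rfl
  rw [this, map_id]

lemma count_U_map (l : List Bool) : (l.map toStep).count U = l.count true :=
  l.count_map_of_injective toStep toStep_inj true
lemma count_D_map (l : List Bool) : (l.map toStep).count D = l.count false :=
  l.count_map_of_injective toStep toStep_inj false
lemma count_true_map (l : List DyckStep) : (l.map ofStep).count true = l.count U :=
  l.count_map_of_injective ofStep ofStep_inj U
lemma count_false_map (l : List DyckStep) : (l.map ofStep).count false = l.count D :=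
  l.count_map_of_injective ofStep ofStep_inj D

def toDyck (w : List Bool) (hw : IsDyck w) : DyckWord where
  toList := w.map toStep
  count_U_eq_count_D := by rw [count_U_map, count_D_map]; exact hw.2
  count_D_le_count_U i := by
    rw [← map_take, count_U_map, count_D_map]; exact hw.1 i

lemma isDyck_of_dyckWord (p : DyckWord) : IsDyck (p.toList.map ofStep) := by
  constructor
  · intro k
    rw [← map_take, count_true_map, count_false_map]
    exact p.count_D_le_count_U k
  · rw [count_true_map, count_false_map]; exact p.count_U_eq_count_D

lemma dyck_decomp {w : List Bool} (hw : IsDyck w) (hne : w ≠ []) :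
    ∃ x y, IsDyck x ∧ IsDyck y ∧ w = true :: (x ++ false :: y) := by
  set p := toDyck w hw with hp_def
  have hp : p ≠ 0 := by
    rw [← DyckWord.toList_ne_nil]
    show w.map toStep ≠ []
    simpa using hne
  have hdec := DyckWord.nest_insidePart_add_outsidePart hp
  refine ⟨p.insidePart.toList.map ofStep, p.outsidePart.toList.map ofStep,
    isDyck_of_dyckWord _, isDyck_of_dyckWord _, ?_⟩
  have hw_list : w = p.toList.map ofStep := by
    rw [hp_def]; exact (map_ofStep_toStep w).symm
  have htl : p.toList = ([U] ++ p.insidePart.toList ++ [D]) ++ p.outsidePart.toList := by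
    conv_lhs => rw [← hdec]
    rfl
  rw [hw_list, htl]
  simp [ofStep]

lemma nopat_to_G : ∀ (n : ℕ) (w : List Bool), w.length ≤ n → IsDyck w → nopat w → G w := by
  intro n
  induction n with
  | zero =>
    intro w hlen _ _
    interval_cases h : w.length
    · exact Or.inl (length_eq_zero_iff.mp h)
  | succ n ih =>
    intro w hlen hw hnp
    rcases eq_or_ne w [] with rfl | hne
    · exact Or.inl rfl
    obtain ⟨x, y, hx, hy, rfl⟩ := dyck_decomp hw hne
    have hlens : x.length ≤ n ∧ y.length ≤ n := by simp at hlen; omega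
    have hw1 : true :: (x ++ false :: y) = (true :: x ++ [false]) ++ y := by simp
    have hnx : nopat x := by
      constructor
      · intro h; exact hnp.1 (h.trans ⟨[true], false :: y, by simp⟩)
      · rintro ⟨z, rfl⟩
        exact hnp.1 ⟨true :: z, y, by simp⟩
    have hnpy : nopat y := by
      constructor
      · intro h; exact hnp.1 (h.trans ⟨true :: x ++ [false], [], by simp⟩)
      · intro h; exact hnp.2 (h.trans ⟨true :: x ++ [false], by simp⟩)
    have hGx := ih x hlens.1 hx hnx
    have hGy := ih y hlens.2 hy hnpy
    rcases eq_or_ne y [] with rfl | hyne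
    · rcases eq_or_ne x [] with rfl | hxne
      · exact Or.inr (Or.inl (by simp))
      · right; right
        have h2 : true :: (x ++ false :: ([] : List Bool)) = true :: x ++ [false] := by simp
        rw [h2]
        exact B.last' hGx hxne
    · rcases hGy with rfl | rfl | hBy
      · exact absurd rfl hyne
      · exact absurd ⟨true :: x, by simp⟩ hnp.2
      · right; right
        rw [hw1]
        exact B.cons' hGx hBy

lemma gamma_zero : gamma 0 = [] := by rw [gamma]
lemma gamma_one : gamma 1 = [true, false] := by rw [gamma]

lemma gamma_two_le {n : ℕ} (hn : 2 ≤ n) : gamma n =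
    ((List.range (Nat.count Nat.Prime (n.factorization.support.sup id) + 1)).map
      (fun i => (true :: gamma (n.factorization (Nat.nth Nat.Prime i))) ++ [false])).flatten := by
  obtain ⟨m, rfl⟩ : ∃ m, n = m + 2 := ⟨n - 2, by omega⟩
  rw [gamma]

lemma map_getD_range {α β : Type*} (L : List α) (f : α → β) (d : α) :
    (List.range L.length).map (fun i => f (L.getD i d)) = L.map f := by
  apply List.ext_getElem (by simp)
  intro i h1 h2
  simp only [List.getElem_map, List.getElem_range]
  simp only [length_map] at h2
  rw [List.getD_eq_getElem L d (by simpa using h2)]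

lemma NT (l : List ℕ) (a : ℕ) (ha : a ≠ 0) :
    ∃ n, 2 ≤ n ∧ (∀ i, n.factorization (Nat.nth Nat.Prime i) = (l ++ [a]).getD i 0) ∧
      Nat.count Nat.Prime (n.factorization.support.sup id) + 1 = (l ++ [a]).length := by
  set L := l ++ [a] with hL
  set len := L.length with hlen
  have hlen1 : 1 ≤ len := by simp [hlen, hL]
  set e : ℕ → ℕ := fun i => L.getD i 0 with he
  set p : ℕ → ℕ := fun i => Nat.nth Nat.Prime i with hp_def
  have hp : ∀ i, (p i).Prime := fun i => Nat.prime_nth_prime i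
  have hmono : StrictMono p := Nat.nth_strictMono Nat.infinite_setOf_prime
  set n := ∏ i ∈ Finset.range len, p i ^ e i with hn
  have hpos : ∀ i ∈ Finset.range len, p i ^ e i ≠ 0 :=
    fun i _ => pow_ne_zero _ (hp i).pos.ne'
  have hfact : n.factorization = ∑ i ∈ Finset.range len, Finsupp.single (p i) (e i) := by
    rw [hn, Nat.factorization_prod hpos]
    exact Finset.sum_congr rfl fun i _ => (hp i).factorization_pow
  have heval : ∀ j, n.factorization (p j) = if j < len then e j else 0 := by
    intro j
    rw [hfact, Finsupp.finset_sum_apply]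
    by_cases hj : j < len
    · rw [if_pos hj]
      rw [Finset.sum_eq_single j]
      · simp
      · intro i _ hij
        exact Finsupp.single_eq_of_ne' (hmono.injective.ne hij)
      · intro h; exact absurd (Finset.mem_range.mpr hj) h
    · rw [if_neg hj]
      apply Finset.sum_eq_zero
      intro i hi
      apply Finsupp.single_eq_of_ne'
      exact hmono.injective.ne (by simp at hi; omega)
  have heval' : ∀ i, n.factorization (p i) = e i := by
    intro i
    rw [heval]
    by_cases hi : i < len
    · rw [if_pos hi]
    · rw [if_neg hi, he]
      simp only []
      rw [List.getD_eq_default]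
      omega
  have hlast : e (len - 1) = a := by
    rw [he]
    simp only []
    rw [List.getD_eq_getElem _ _ (by omega)]
    have : len - 1 = l.length := by simp [hlen, hL]
    simp [hL, this]
  have hne0 : n.factorization (p (len - 1)) ≠ 0 := by
    rw [heval', hlast]; exact ha
  have hn0 : n ≠ 0 := by
    rw [hn]
    exact Finset.prod_ne_zero_iff.mpr hpos
  have hn2 : 2 ≤ n := by
    rcases Nat.lt_or_ge n 2 with h | h
    · interval_cases n
      · exact absurd rfl hn0
      · rw [Nat.factorization_one] at hne0; simp at hne0
    · exact h
  have hmem : p (len - 1) ∈ n.factorization.support := Finsupp.mem_support_iff.mpr hne0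
  have hsup : n.factorization.support.sup id = p (len - 1) := by
    apply _root_.le_antisymm
    · apply Finset.sup_le
      intro q hq
      rw [Finsupp.mem_support_iff, hfact, Finsupp.finset_sum_apply] at hq
      obtain ⟨i, hi, hiq⟩ : ∃ i ∈ Finset.range len, Finsupp.single (p i) (e i) q ≠ 0 := by
        by_contra hc
        push_neg at hc
        exact hq (Finset.sum_eq_zero hc)
      have : q = p i := by
        by_contra hne
        exact hiq (Finsupp.single_eq_of_ne' (fun h => hne h.symm))
      rw [this]
      exact hmono.monotone (by simp at hi; omega)
    · exact Finset.le_sup (f := id) hmem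
  have hcount : Nat.count Nat.Prime (p (len - 1)) = len - 1 :=
    Nat.count_nth_of_infinite Nat.infinite_setOf_prime _
  refine ⟨n, hn2, fun i => heval' i, ?_⟩
  rw [hsup, hcount]
  omega


lemma gamma_ne_nil {n : ℕ} (hn : n ≠ 0) : gamma n ≠ [] := by
  rcases Nat.lt_or_ge n 2 with h | h
  · interval_cases n
    · exact absurd rfl hn
    · rw [gamma_one]; simp
  · rw [gamma_two_le h]
    intro hnil
    rw [List.flatten_eq_nil_iff] at hnil
    have hmem : (true :: gamma (n.factorization (Nat.nth Nat.Prime 0))) ++ [false] ∈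
        (List.range (Nat.count Nat.Prime (n.factorization.support.sup id) + 1)).map
          (fun i => (true :: gamma (n.factorization (Nat.nth Nat.Prime i))) ++ [false]) :=
      List.mem_map.mpr ⟨0, by simp, rfl⟩
    simpa using hnil _ hmem

lemma spell_B : ∀ (l : List ℕ) (a : ℕ), (∀ b ∈ l ++ [a], G (gamma b)) → a ≠ 0 →
    B (((l ++ [a]).map (fun m => (true :: gamma m) ++ [false])).flatten) := by
  intro l
  induction l with
  | nil =>
    intro a hG ha
    simp only [List.nil_append, List.map_cons, List.map_nil, List.flatten_cons,
      List.flatten_nil, List.append_nil]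
    exact B.last' (hG a (by simp)) (gamma_ne_nil ha)
  | cons b l ih =>
    intro a hG ha
    simp only [List.cons_append, List.map_cons, List.flatten_cons]
    exact B.cons' (hG b (by simp)) (ih a (fun c hc => hG c (by simp at hc ⊢; tauto)) ha)

lemma G_gamma (n : ℕ) : G (gamma n) := by
  induction n using Nat.strong_induction_on with
  | _ n ih =>
  rcases Nat.lt_or_ge n 2 with h | h
  · interval_cases n
    · exact Or.inl gamma_zero
    · exact Or.inr (Or.inl gamma_one)
  · rw [gamma_two_le h]
    set k := Nat.count Nat.Prime (n.factorization.support.sup id) with hk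
    set f : ℕ → ℕ := fun i => n.factorization (Nat.nth Nat.Prime i) with hf
    have hsupp : n.factorization.support.Nonempty := by
      rw [Nat.support_factorization]
      exact Nat.nonempty_primeFactors.mpr (by omega)
    obtain ⟨q, hq_mem, hq_eq⟩ := Finset.exists_mem_eq_sup _ hsupp id
    have hq_prime : q.Prime := Nat.prime_of_mem_primeFactors (by
      rwa [Nat.support_factorization] at hq_mem)
    have hlast : f k ≠ 0 := by
      rw [hf]
      simp only []
      rw [hk, hq_eq]
      simp only [id]
      rw [Nat.nth_count hq_prime]
      exact Finsupp.mem_support_iff.mp hq_mem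
    have hGf : ∀ b ∈ ((List.range k).map f) ++ [f k], G (gamma b) := by
      intro b hb
      have : ∃ i, f i = b := by
        simp [List.mem_append, List.mem_map] at hb
        rcases hb with ⟨i, -, hi⟩ | hb
        · exact ⟨i, hi⟩
        · exact ⟨k, hb.symm⟩
      obtain ⟨i, rfl⟩ := this
      exact ih _ (Nat.factorization_lt _ (by omega))
    have hre : (List.range (k+1)).map (fun i => (true :: gamma (f i)) ++ [false]) =
        ((((List.range k).map f) ++ [f k]).map (fun m => (true :: gamma m) ++ [false])) := by
      have h1 : (List.range k).map f ++ [f k] = (List.range (k+1)).map f := by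
        rw [List.range_succ, List.map_append]
        rfl
      rw [h1, List.map_map]
      rfl
    right; right
    rw [show (List.range (k + 1)).map
        (fun i => (true :: gamma (n.factorization (Nat.nth Nat.Prime i))) ++ [false]) =
        (List.range (k+1)).map (fun i => (true :: gamma (f i)) ++ [false]) from rfl, hre]
    exact spell_B _ _ hGf hlast

lemma gamma_spell (l : List ℕ) (a : ℕ) (ha : a ≠ 0) :
    ∃ n, gamma n = ((l ++ [a]).map (fun m => (true :: gamma m) ++ [false])).flatten := by
  obtain ⟨n, hn2, hev, hcnt⟩ := NT l a ha
  refine ⟨n, ?_⟩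
  rw [gamma_two_le hn2, hcnt]
  congr 1
  rw [← map_getD_range (l ++ [a]) (fun m => (true :: gamma m) ++ [false]) 0]
  apply List.map_congr_left
  intro i hi
  rw [hev i]



lemma main_B : ∀ N : ℕ, ∀ w : List Bool, w.length ≤ N → B w →
    ∃ l a, a ≠ 0 ∧ w = (((l ++ [a]).map (fun m => (true :: gamma m) ++ [false])).flatten) := by
  intro N
  induction N with
  | zero =>
    intro w hl hB
    exact absurd (List.length_eq_zero_iff.mp (Nat.le_zero.mp hl)) hB.ne_nil
  | succ N ih =>
    intro w hl hB
    have hrange : ∀ v : List Bool, v.length ≤ N → G v → ∃ m, gamma m = v := by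
      intro v hv hGv
      rcases hGv with rfl | rfl | hBv
      · exact ⟨0, gamma_zero⟩
      · exact ⟨1, gamma_one⟩
      · obtain ⟨l, a, ha, rfl⟩ := ih v hv hBv
        exact gamma_spell l a ha
    cases hB with
    | last1 => exact ⟨[], 1, one_ne_zero, by simp [gamma_one]⟩
    | last x hx =>
      have hxl : x.length ≤ N := by simp at hl; omega
      obtain ⟨m, hm⟩ := hrange x hxl (Or.inr (Or.inr hx))
      have hm0 : m ≠ 0 := by rintro rfl; rw [gamma_zero] at hm; exact hx.ne_nil hm.symm
      exact ⟨[], m, hm0, by simp [hm]⟩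
    | cons0 y hy =>
      have hyl : y.length ≤ N := by simp at hl; omega
      obtain ⟨l, a, ha, hy_eq⟩ := ih y hyl hy
      exact ⟨0 :: l, a, ha, by simp [gamma_zero, hy_eq]⟩
    | cons1 y hy =>
      have hyl : y.length ≤ N := by simp at hl; omega
      obtain ⟨l, a, ha, hy_eq⟩ := ih y hyl hy
      exact ⟨1 :: l, a, ha, by simp [gamma_one, hy_eq]⟩
    | cons x y hx hy =>
      have hxl : x.length ≤ N := by simp at hl; omega
      have hyl : y.length ≤ N := by simp at hl; omega
      obtain ⟨m, hm⟩ := hrange x hxl (Or.inr (Or.inr hx))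
      obtain ⟨l, a, ha, hy_eq⟩ := ih y hyl hy
      exact ⟨m :: l, a, ha, by simp [hm, hy_eq]⟩

end GammaAux

/-- A Dyck word `w` lies in the image of `γ` iff ")())" (encoded as
`[false,true,false,false]`) is not an infix of `w` and ")()" (`[false,true,false]`)
is not a suffix of `w`. -/
theorem gamma_range_characterization (w : List Bool) (hw : IsDyck w) :
    w ∈ Set.range gamma ↔
      ¬ ([false, true, false, false] <:+: w) ∧ ¬ ([false, true, false] <:+ w) := by
  constructor
  · rintro ⟨n, rfl⟩
    exact (G_gamma n).nopat
  · rintro ⟨h1, h2⟩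
    have hG := nopat_to_G w.length w le_rfl hw ⟨h1, h2⟩
    rcases hG with rfl | rfl | hB
    · exact ⟨0, gamma_zero⟩
    · exact ⟨1, gamma_one⟩
    · obtain ⟨l, a, ha, hw_eq⟩ := main_B w.length w le_rfl hB
      obtain ⟨n, hn⟩ := gamma_spell l a ha
      exact ⟨n, by rw [hn, ← hw_eq]⟩
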